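/- Let s ∈ [−1,1], let a : ℕ → ℝ be coefficients such that Σ_{i=0}^{∞} |a_i| r^i < ∞ for some r > 2, and let g(t) = Σ_{i=0}^{∞} a_i (t − s)^i (which converges for all t ∈ [−1,1]). Let t_1, …, t_n ∈ [−1,1] be nodes with t_k ≠ s for all k and w_1, …, w_n ∈ ℝ weights. Define E^i(s) = | ∫_{−1}^{1} log|t − s| (t − s)^i dt − Σ_{k=1}^{n} w_k log|t_k − s| (t_k − s)^i |. Then the series Σ_{i=0}^{∞} |a_i| E^i(s) converges and | ∫_{−1}^{1} log|t − s| g(t) dt − Σ_{k=1}^{n} w_k log|t_k − s| g(t_k) | ≤ Σ_{i=0}^{∞} |a_i| E^i(s). -/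

import Mathlib

open Real

private lemma aux_log01 : IntervalIntegrable Real.log MeasureTheory.volume 0 1 := by
  have h := intervalIntegral.intervalIntegrable_deriv_of_nonneg
    (g := fun x : ℝ => x - x * Real.log x) (g' := fun x : ℝ => -Real.log x)
    (a := (0:ℝ)) (b := 1)
    ((continuous_id.sub Real.continuous_mul_log).continuousOn)
    (fun x hx => by
      simp only [min_def, max_def] at hx
      norm_num at hx
      have hx0 : x ≠ 0 := ne_of_gt hx.1
      have h1 := (hasDerivAt_id x).sub (Real.hasDerivAt_mul_log hx0)
      exact h1.congr_deriv (by ring))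
    (fun x hx => by
      simp only [min_def, max_def] at hx
      norm_num at hx
      have : Real.log x ≤ 0 := Real.log_nonpos hx.1.le hx.2.le
      simp only [neg_nonneg]
      exact this)
  have h2 := h.neg
  refine h2.congr ?_
  intro x _
  simp

private lemma aux_log02 : IntervalIntegrable Real.log MeasureTheory.volume 0 2 := by
  refine aux_log01.trans ?_
  apply intervalIntegral.intervalIntegrable_log
  rw [Set.uIcc_of_le (by norm_num : (1:ℝ) ≤ 2)]
  intro h
  norm_num at h

private lemma aux_logabs_int (s : ℝ) (hs : s ∈ Set.Icc (-1:ℝ) 1) :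
    IntervalIntegrable (fun τ => Real.log |τ - s|) MeasureTheory.volume (-1) 1 := by
  obtain ⟨hs1, hs2⟩ := hs
  have h1 : IntervalIntegrable (fun τ => Real.log |τ - s|) MeasureTheory.volume (-1) s := by
    have h := (aux_log02.comp_sub_left s).symm
    -- h : IntervalIntegrable (fun x => log (s - x)) volume (s - 2) (s - 0)
    have h' : IntervalIntegrable (fun x => Real.log (s - x)) MeasureTheory.volume (-1) s := by
      apply h.mono_set
      rw [Set.uIcc_of_le (by linarith : (-1:ℝ) ≤ s),
        Set.uIcc_of_le (by linarith : s - 2 ≤ s - 0)]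
      exact Set.Icc_subset_Icc (by linarith) (by norm_num)
    rw [intervalIntegrable_iff] at h' ⊢
    refine h'.congr_fun ?_ measurableSet_uIoc
    intro τ hτ
    rw [Set.uIoc_of_le (by linarith : (-1:ℝ) ≤ s)] at hτ
    show Real.log (s - τ) = Real.log |τ - s|
    rw [abs_sub_comm, abs_of_nonneg (by linarith [hτ.2] : 0 ≤ s - τ)]
  have h2 : IntervalIntegrable (fun τ => Real.log |τ - s|) MeasureTheory.volume s 1 := by
    have h := aux_log02.comp_sub_right s
    -- h : IntervalIntegrable (fun x => log (x - s)) volume (0 + s) (2 + s)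
    have h' : IntervalIntegrable (fun x => Real.log (x - s)) MeasureTheory.volume s 1 := by
      apply h.mono_set
      rw [Set.uIcc_of_le (by linarith : s ≤ 1),
        Set.uIcc_of_le (by linarith : 0 + s ≤ 2 + s)]
      exact Set.Icc_subset_Icc (by linarith) (by linarith)
    rw [intervalIntegrable_iff] at h' ⊢
    refine h'.congr_fun ?_ measurableSet_uIoc
    intro τ hτ
    rw [Set.uIoc_of_le (by linarith : s ≤ 1)] at hτ
    show Real.log (τ - s) = Real.log |τ - s|
    rw [abs_of_nonneg (by linarith [hτ.1] : 0 ≤ τ - s)]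
  exact h1.trans h2

open MeasureTheory

/-- Taylor-expansion bound for the quadrature error of the logarithmic kernel:
if the density `g` is given by a power series around the source point `s`
whose coefficients satisfy `∑ |a_i| r^i < ∞` for some `r > 2`, then the total
quadrature error is bounded by the absolutely convergent series
`∑ |a_i| E^i(s)` of weighted moment errors. -/
theorem quadrature_error_taylor_bound
    (s : ℝ) (hs : s ∈ Set.Icc (-1:ℝ) 1)
    (a : ℕ → ℝ) (r : ℝ) (hr : 2 < r) (ha : Summable fun i : ℕ => |a i| * r ^ i)
    (g : ℝ → ℝ) (hg : ∀ t : ℝ, g t = ∑' i : ℕ, a i * (t - s) ^ i)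
    (n : ℕ) (t : Fin n → ℝ) (ht : ∀ k, t k ∈ Set.Icc (-1:ℝ) 1)
    (hts : ∀ k, t k ≠ s) (w : Fin n → ℝ)
    (E : ℕ → ℝ)
    (hE : ∀ i : ℕ, E i =
      |(∫ τ in (-1:ℝ)..1, Real.log |τ - s| * (τ - s) ^ i)
        - ∑ k : Fin n, w k * (Real.log |t k - s| * (t k - s) ^ i)|) :
    Summable (fun i : ℕ => |a i| * E i) ∧
      |(∫ τ in (-1:ℝ)..1, Real.log |τ - s| * g τ)
          - ∑ k : Fin n, w k * (Real.log |t k - s| * g (t k))|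
        ≤ ∑' i : ℕ, |a i| * E i := by
  have hle : (-1:ℝ) ≤ 1 := by norm_num
  -- abbreviations
  set M : ℕ → ℝ := fun i => ∫ τ in (-1:ℝ)..1, Real.log |τ - s| * (τ - s) ^ i with hM_def
  set Q : ℕ → ℝ := fun i => ∑ k : Fin n, w k * (Real.log |t k - s| * (t k - s) ^ i) with hQ_def
  have hE' : ∀ i, E i = |M i - Q i| := hE
  -- distance bounds
  have habs : ∀ x : ℝ, x ∈ Set.Icc (-1:ℝ) 1 → |x - s| ≤ 2 := by
    intro x hx
    rw [abs_sub_le_iff]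
    constructor
    · linarith [hx.2, hs.1]
    · linarith [hx.1, hs.2]
  have habs' : ∀ x : ℝ, x ∈ Set.Icc (-1:ℝ) 1 → ∀ i : ℕ, |x - s| ^ i ≤ 2 ^ i :=
    fun x hx i => pow_le_pow_left₀ (abs_nonneg _) (habs x hx) i
  -- integrability
  have hL : IntervalIntegrable (fun τ => Real.log |τ - s|) volume (-1) 1 := aux_logabs_int s hs
  have hLIoc : IntegrableOn (fun τ => Real.log |τ - s|) (Set.Ioc (-1:ℝ) 1) volume :=
    (intervalIntegrable_iff_integrableOn_Ioc_of_le hle).mp hL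
  have hLabs : IntegrableOn (fun τ => abs (Real.log |τ - s|)) (Set.Ioc (-1:ℝ) 1) volume := hLIoc.abs
  set C : ℝ := ∫ τ in Set.Ioc (-1:ℝ) 1, abs (Real.log |τ - s|) with hC_def
  set D : ℝ := ∑ k : Fin n, |w k| * abs (Real.log |t k - s|) with hD_def
  have hC0 : 0 ≤ C := integral_nonneg fun τ => abs_nonneg _
  have hD0 : 0 ≤ D := Finset.sum_nonneg fun k _ => mul_nonneg (abs_nonneg _) (abs_nonneg _)
  have hfi : ∀ i : ℕ, IntervalIntegrable (fun τ => Real.log |τ - s| * (τ - s) ^ i)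
      volume (-1) 1 := fun i => hL.mul_continuousOn (by fun_prop)
  have hfiIoc : ∀ i : ℕ, IntegrableOn (fun τ => Real.log |τ - s| * (τ - s) ^ i)
      (Set.Ioc (-1:ℝ) 1) volume :=
    fun i => (intervalIntegrable_iff_integrableOn_Ioc_of_le hle).mp (hfi i)
  -- bound on the moments
  have hMb : ∀ i : ℕ, |M i| ≤ C * 2 ^ i := by
    intro i
    have h1 : |M i| ≤ ∫ τ in Set.Ioc (-1:ℝ) 1, |Real.log |τ - s| * (τ - s) ^ i| := by
      rw [hM_def]
      simp only
      rw [intervalIntegral.integral_of_le hle]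
      have h0 := norm_integral_le_integral_norm (μ := volume.restrict (Set.Ioc (-1:ℝ) 1))
          (f := fun τ => Real.log |τ - s| * (τ - s) ^ i)
      simpa only [Real.norm_eq_abs] using h0
    refine h1.trans ?_
    have h2 : (∫ τ in Set.Ioc (-1:ℝ) 1, |Real.log |τ - s| * (τ - s) ^ i|)
        ≤ ∫ τ in Set.Ioc (-1:ℝ) 1, abs (Real.log |τ - s|) * 2 ^ i := by
      refine setIntegral_mono_on (hfiIoc i).abs (hLabs.mul_const _) measurableSet_Ioc ?_
      intro τ hτ
      rw [abs_mul, abs_pow]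
      exact mul_le_mul_of_nonneg_left (habs' τ (Set.Ioc_subset_Icc_self hτ) i) (abs_nonneg _)
    refine h2.trans_eq ?_
    rw [integral_mul_const]
  -- bound on the quadrature sums
  have hQb : ∀ i : ℕ, |Q i| ≤ D * 2 ^ i := by
    intro i
    refine (Finset.abs_sum_le_sum_abs _ _).trans ?_
    rw [hD_def, Finset.sum_mul]
    refine Finset.sum_le_sum fun k _ => ?_
    rw [abs_mul, abs_mul, abs_pow, mul_assoc]
    refine mul_le_mul_of_nonneg_left ?_ (abs_nonneg _)
    exact mul_le_mul_of_nonneg_left (habs' _ (ht k) i) (abs_nonneg _)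
  -- summability of |a i| * 2^i
  have hsum2 : Summable fun i : ℕ => |a i| * 2 ^ i := by
    refine Summable.of_nonneg_of_le (fun i => by positivity) (fun i => ?_) ha
    exact mul_le_mul_of_nonneg_left
      (pow_le_pow_left₀ (by norm_num) hr.le i) (abs_nonneg _)
  -- summability of |a i| * E i
  have hsumE : Summable fun i : ℕ => |a i| * E i := by
    refine Summable.of_nonneg_of_le
      (fun i => mul_nonneg (abs_nonneg _) (by rw [hE' i]; exact abs_nonneg _)) (fun i => ?_)
      (hsum2.mul_right (C + D))
    calc |a i| * E i ≤ |a i| * ((C + D) * 2 ^ i) := by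
          refine mul_le_mul_of_nonneg_left ?_ (abs_nonneg _)
          rw [hE' i]
          calc |M i - Q i| ≤ |M i| + |Q i| := abs_sub _ _
            _ ≤ C * 2 ^ i + D * 2 ^ i := add_le_add (hMb i) (hQb i)
            _ = (C + D) * 2 ^ i := by ring
      _ = |a i| * 2 ^ i * (C + D) := by ring
  refine ⟨hsumE, ?_⟩
  -- summability of pointwise power series
  have hsumx : ∀ x : ℝ, x ∈ Set.Icc (-1:ℝ) 1 → Summable fun i : ℕ => a i * (x - s) ^ i := by
    intro x hx
    refine Summable.of_norm_bounded hsum2 fun i => ?_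
    rw [Real.norm_eq_abs, abs_mul, abs_pow]
    exact mul_le_mul_of_nonneg_left (habs' x hx i) (abs_nonneg _)
  -- interchange of integral and sum
  have hkey : (∫ τ in (-1:ℝ)..1, Real.log |τ - s| * g τ) = ∑' i : ℕ, a i * M i := by
    rw [intervalIntegral.integral_of_le hle]
    have hpt : ∀ τ : ℝ, Real.log |τ - s| * g τ
        = ∑' i : ℕ, a i * (Real.log |τ - s| * (τ - s) ^ i) := by
      intro τ
      rw [hg τ, ← tsum_mul_left]
      exact tsum_congr fun i => by ring
    simp_rw [hpt]
    have hFint : ∀ i : ℕ, Integrable (fun τ => a i * (Real.log |τ - s| * (τ - s) ^ i))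
        (volume.restrict (Set.Ioc (-1:ℝ) 1)) := fun i => (hfiIoc i).const_mul (a i)
    have hFsum : Summable fun i : ℕ =>
        ∫ τ in Set.Ioc (-1:ℝ) 1, ‖a i * (Real.log |τ - s| * (τ - s) ^ i)‖ := by
      refine Summable.of_nonneg_of_le
        (fun i => integral_nonneg fun τ => norm_nonneg _) (fun i => ?_)
        (hsum2.mul_right C)
      have h1 : (∫ τ in Set.Ioc (-1:ℝ) 1, ‖a i * (Real.log |τ - s| * (τ - s) ^ i)‖)
          ≤ ∫ τ in Set.Ioc (-1:ℝ) 1, |a i| * 2 ^ i * abs (Real.log |τ - s|) := by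
        refine setIntegral_mono_on (hFint i).norm (hLabs.const_mul _) measurableSet_Ioc ?_
        intro τ hτ
        rw [Real.norm_eq_abs, abs_mul, abs_mul, abs_pow]
        calc |a i| * (abs (Real.log |τ - s|) * |τ - s| ^ i)
            = |a i| * |τ - s| ^ i * abs (Real.log |τ - s|) := by ring
          _ ≤ |a i| * 2 ^ i * abs (Real.log |τ - s|) := by
              refine mul_le_mul_of_nonneg_right ?_ (abs_nonneg _)
              exact mul_le_mul_of_nonneg_left (habs' τ (Set.Ioc_subset_Icc_self hτ) i)
                (abs_nonneg _)
      refine h1.trans_eq ?_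
      rw [integral_const_mul]
    rw [← integral_tsum_of_summable_integral_norm hFint hFsum]
    refine tsum_congr fun i => ?_
    rw [integral_const_mul, hM_def]
    simp only
    rw [intervalIntegral.integral_of_le hle]
  -- interchange of quadrature sum and series
  have hkeyQ : (∑ k : Fin n, w k * (Real.log |t k - s| * g (t k))) = ∑' i : ℕ, a i * Q i := by
    have hterm : ∀ k : Fin n, w k * (Real.log |t k - s| * g (t k))
        = ∑' i : ℕ, w k * (Real.log |t k - s| * (a i * (t k - s) ^ i)) := by
      intro k
      rw [hg (t k), ← tsum_mul_left, ← tsum_mul_left]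
    calc (∑ k : Fin n, w k * (Real.log |t k - s| * g (t k)))
        = ∑ k : Fin n, ∑' i : ℕ, w k * (Real.log |t k - s| * (a i * (t k - s) ^ i)) :=
          Finset.sum_congr rfl fun k _ => hterm k
      _ = ∑' i : ℕ, ∑ k : Fin n, w k * (Real.log |t k - s| * (a i * (t k - s) ^ i)) := by
          refine (Summable.tsum_finsetSum fun k _ => ?_).symm
          exact ((hsumx (t k) (ht k)).mul_left _).mul_left _
      _ = ∑' i : ℕ, a i * Q i := by
          refine tsum_congr fun i => ?_
          rw [hQ_def]
          simp only
          rw [Finset.mul_sum]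
          exact Finset.sum_congr rfl fun k _ => by ring
  -- summability of a i * M i and a i * Q i
  have hSM : Summable fun i : ℕ => a i * M i := by
    refine Summable.of_norm_bounded (hsum2.mul_right C) fun i => ?_
    rw [Real.norm_eq_abs, abs_mul]
    calc |a i| * |M i| ≤ |a i| * (C * 2 ^ i) :=
          mul_le_mul_of_nonneg_left (hMb i) (abs_nonneg _)
      _ = |a i| * 2 ^ i * C := by ring
  have hSQ : Summable fun i : ℕ => a i * Q i := by
    refine Summable.of_norm_bounded (hsum2.mul_right D) fun i => ?_
    rw [Real.norm_eq_abs, abs_mul]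
    calc |a i| * |Q i| ≤ |a i| * (D * 2 ^ i) :=
          mul_le_mul_of_nonneg_left (hQb i) (abs_nonneg _)
      _ = |a i| * 2 ^ i * D := by ring
  -- final bound
  rw [hkey, hkeyQ, ← Summable.tsum_sub hSM hSQ]
  have hnorm : Summable fun i : ℕ => ‖a i * M i - a i * Q i‖ := by
    have : (fun i : ℕ => ‖a i * M i - a i * Q i‖) = fun i : ℕ => |a i| * E i := by
      funext i
      rw [Real.norm_eq_abs, ← mul_sub, abs_mul, hE' i]
    rw [this]
    exact hsumE
  calc |∑' i : ℕ, (a i * M i - a i * Q i)| ≤ ∑' i : ℕ, ‖a i * M i - a i * Q i‖ := by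
        simpa [Real.norm_eq_abs] using norm_tsum_le_tsum_norm hnorm
    _ = ∑' i : ℕ, |a i| * E i := tsum_congr fun i => by
        rw [Real.norm_eq_abs, ← mul_sub, abs_mul, hE' i]
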